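/- Let n and ℓ be integers with 3 ≤ ℓ ≤ ⌊n/2⌋, and let k be an integer with 1 ≤ k ≤ n - 1, regarded as an element of ZMod n. Then Fix(n,ℓ,k) ≤ C(⌊n/2⌋, ⌊ℓ/2⌋). -/

import Mathlib

/-- Rotation of a configuration `v : ZMod n → Bool` by `k`: `(k • v) i = v (i - k)`. -/
def rot (n : ℕ) (k : ZMod n) (v : ZMod n → Bool) : ZMod n → Bool :=
  fun i => v (i - k)

/-- The set of configurations with exactly `ℓ` entries equal to `true`. -/
def Sconf (n ℓ : ℕ) [NeZero n] : Finset (ZMod n → Bool) :=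
  Finset.univ.filter fun v => (Finset.univ.filter fun i => v i = true).card = ℓ

/-- The rotation orbit of a configuration. -/
def orbitOf (n : ℕ) [NeZero n] (v : ZMod n → Bool) : Finset (ZMod n → Bool) :=
  Finset.univ.image fun k : ZMod n => rot n k v

/-- The number of rotation orbits on `Sconf n ℓ`. -/
def Orb (n ℓ : ℕ) [NeZero n] : ℕ := ((Sconf n ℓ).image (orbitOf n)).card

/-- The number of configurations in `Sconf n ℓ` fixed by rotation by `k`. -/
def FixCount (n ℓ : ℕ) [NeZero n] (k : ZMod n) : ℕ :=
  ((Sconf n ℓ).filter fun v => rot n k v = v).card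

private lemma fix_nat_mul {n : ℕ} [NeZero n] {k : ZMod n} {v : ZMod n → Bool}
    (hv : rot n k v = v) (t : ℕ) (i : ZMod n) : v (i - (t : ZMod n) * k) = v i := by
  induction t with
  | zero => simp
  | succ t ih =>
    have h := congrFun hv (i - (t : ZMod n) * k)
    simp only [rot] at h
    have e : i - ((t + 1 : ℕ) : ZMod n) * k = (i - (t : ZMod n) * k) - k := by
      push_cast; ring
    rw [e, h, ih]

private lemma fix_congr {n k : ℕ} [NeZero n] {v : ZMod n → Bool}
    (hv : rot n (k : ZMod n) v = v) {i i' : ZMod n}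
    (h : ((i.val : ℕ) : ZMod (n.gcd k)) = ((i'.val : ℕ) : ZMod (n.gcd k))) : v i = v i' := by
  have hn0 : 0 < n := Nat.pos_of_ne_zero (NeZero.ne n)
  have hg0 : 0 < n.gcd k := Nat.gcd_pos_of_pos_left _ hn0
  haveI : NeZero (n.gcd k) := ⟨hg0.ne'⟩
  -- from h, get a ModEq
  have hmod : i.val % n.gcd k = i'.val % n.gcd k := by
    have := congrArg ZMod.val h
    rwa [ZMod.val_natCast, ZMod.val_natCast] at this
  have hdvd : ((n.gcd k : ℕ) : ℤ) ∣ (i'.val : ℤ) - (i.val : ℤ) :=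
    Nat.ModEq.dvd (show Nat.ModEq (n.gcd k) i.val i'.val from hmod)
  obtain ⟨t, ht⟩ := hdvd
  -- express gcd as a multiple of k in ZMod n
  have hbez := Nat.gcd_eq_gcd_ab n k
  have h1 : ((n.gcd k : ℕ) : ZMod n) = (k : ZMod n) * ((n.gcdB k : ℤ) : ZMod n) := by
    have := congrArg (fun z : ℤ => (z : ZMod n)) hbez
    push_cast at this
    simpa [ZMod.natCast_self] using this
  have h2 : i' - i = ((n.gcd k : ℕ) : ZMod n) * ((t : ℤ) : ZMod n) := by
    have := congrArg (fun z : ℤ => (z : ZMod n)) ht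
    push_cast at this
    simpa [ZMod.natCast_val, ZMod.cast_id] using this
  set c : ZMod n := ((n.gcdB k : ℤ) : ZMod n) * ((t : ℤ) : ZMod n) with hc
  have hx : (k : ZMod n) * c = i' - i := by rw [hc, h2, h1]; ring
  have hi : i = i' - ((c.val : ℕ) : ZMod n) * (k : ZMod n) := by
    have hcv : ((c.val : ℕ) : ZMod n) = c := by
      simp [ZMod.natCast_val, ZMod.cast_id]
    rw [hcv, mul_comm, hx]; ring
  rw [hi, fix_nat_mul hv]

private lemma fiber_card {n g e : ℕ} [NeZero n] (hg : 0 < g) (hn : n = g * e) (j : ZMod g) :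
    (Finset.univ.filter fun i : ZMod n => ((i.val : ℕ) : ZMod g) = j).card = e := by
  haveI : NeZero g := ⟨hg.ne'⟩
  have hn0 : 0 < n := Nat.pos_of_ne_zero (NeZero.ne n)
  have hjv : j.val < g := ZMod.val_lt j
  have himg : (Finset.univ.filter fun i : ZMod n => ((i.val : ℕ) : ZMod g) = j)
      = (Finset.range e).image (fun t => ((j.val + g * t : ℕ) : ZMod n)) := by
    ext i
    simp only [Finset.mem_filter, Finset.mem_univ, true_and, Finset.mem_image, Finset.mem_range]
    constructor
    · intro h
      have hiv : i.val < n := ZMod.val_lt i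
      refine ⟨i.val / g, ?_, ?_⟩
      · apply Nat.div_lt_of_lt_mul
        omega
      · have hmod : i.val % g = j.val := by
          have := congrArg ZMod.val h
          rwa [ZMod.val_natCast] at this
        have : j.val + g * (i.val / g) = i.val := by
          rw [← hmod]; exact Nat.mod_add_div _ _
        rw [this, ZMod.natCast_val, ZMod.cast_id]
    · rintro ⟨t, ht, rfl⟩
      have hlt : j.val + g * t < n := by
        have h1 : j.val + g * t < g * (t + 1) := by rw [Nat.mul_succ]; omega
        have h2 : g * (t + 1) ≤ g * e := Nat.mul_le_mul_left g ht
        omega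
      rw [ZMod.val_cast_of_lt hlt]
      push_cast
      simp [ZMod.natCast_self, ZMod.natCast_val, ZMod.cast_id]
  rw [himg, Finset.card_image_of_injOn, Finset.card_range]
  intro t ht t' ht' hEq
  simp only [Finset.coe_range, Set.mem_Iio] at ht ht'
  have hlt : ∀ u, u < e → j.val + g * u < n := by
    intro u hu
    have h1 : j.val + g * u < g * (u + 1) := by rw [Nat.mul_succ]; omega
    have h2 : g * (u + 1) ≤ g * e := Nat.mul_le_mul_left g hu
    omega
  have := congrArg ZMod.val hEq
  rw [ZMod.val_cast_of_lt (hlt t ht), ZMod.val_cast_of_lt (hlt t' ht')] at this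
  have := Nat.eq_of_mul_eq_mul_left hg (by omega : g * t = g * t')
  exact this

private lemma trues_card {n g e : ℕ} [NeZero n] [NeZero g] (hg : 0 < g) (hn : n = g * e)
    (v : ZMod n → Bool) (w : ZMod g → Bool)
    (hw : ∀ i : ZMod n, v i = w ((i.val : ℕ) : ZMod g)) :
    (Finset.univ.filter fun i : ZMod n => v i = true).card
      = e * (Finset.univ.filter fun j : ZMod g => w j = true).card := by
  have hmaps : ∀ i ∈ (Finset.univ.filter fun i : ZMod n => v i = true),
      ((i.val : ℕ) : ZMod g) ∈ (Finset.univ.filter fun j : ZMod g => w j = true) := by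
    intro i hi
    simp only [Finset.mem_filter, Finset.mem_univ, true_and] at hi ⊢
    rw [← hw i]; exact hi
  rw [Finset.card_eq_sum_card_fiberwise hmaps]
  have hsum : ∀ j ∈ (Finset.univ.filter fun j : ZMod g => w j = true),
      (Finset.filter (fun i => ((i.val : ℕ) : ZMod g) = j)
        (Finset.filter (fun i : ZMod n => v i = true) Finset.univ)).card = e := by
    intro j hj
    simp only [Finset.mem_filter, Finset.mem_univ, true_and] at hj
    have hset : (Finset.filter (fun i => ((i.val : ℕ) : ZMod g) = j)
          (Finset.filter (fun i : ZMod n => v i = true) Finset.univ))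
        = Finset.univ.filter fun i : ZMod n => ((i.val : ℕ) : ZMod g) = j := by
      ext i
      simp only [Finset.mem_filter, Finset.mem_univ, true_and]
      constructor
      · rintro ⟨_, h⟩; exact h
      · intro h; exact ⟨by rw [hw i, h, hj], h⟩
    rw [hset, fiber_card hg hn j]
  rw [Finset.sum_congr rfl hsum, Finset.sum_const, smul_eq_mul, mul_comm]

private lemma choose_mono_right {N a b : ℕ} (hab : a ≤ b) (hb : b ≤ N / 2) :
    N.choose a ≤ N.choose b := by
  induction b with
  | zero =>
    have : a = 0 := by omega
    simp [this]
  | succ b ih =>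
    rcases Nat.eq_or_lt_of_le hab with rfl | hlt
    · exact le_refl _
    · have h1 : a ≤ b := by omega
      have h2 : b ≤ N / 2 := by omega
      exact (ih h1 h2).trans (Nat.choose_le_succ_of_lt_half_left (by omega))

/-- Any nontrivial rotation fixes at most `C(⌊n/2⌋, ⌊ℓ/2⌋)` configurations of `Sconf n ℓ`
when `3 ≤ ℓ ≤ ⌊n/2⌋`. -/
theorem stmt_4 (n ℓ k : ℕ) (hℓ3 : 3 ≤ ℓ) (hℓn : ℓ ≤ n / 2) (hk1 : 1 ≤ k) (hkn : k ≤ n - 1) :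
    haveI : NeZero n := ⟨by omega⟩
    FixCount n ℓ (k : ZMod n) ≤ (n / 2).choose (ℓ / 2) := by
  haveI : NeZero n := ⟨by omega⟩
  show FixCount n ℓ (k : ZMod n) ≤ (n / 2).choose (ℓ / 2)
  have hn6 : 6 ≤ n := by omega
  have hg0 : 0 < n.gcd k := Nat.gcd_pos_of_pos_left _ (by omega)
  haveI : NeZero (n.gcd k) := ⟨hg0.ne'⟩
  set g := n.gcd k with hgdef
  obtain ⟨e, hn⟩ := Nat.gcd_dvd_left n k
  rw [← hgdef] at hn
  have hgk : g ∣ k := Nat.gcd_dvd_right n k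
  have hgklt : g ≤ k := Nat.le_of_dvd (by omega) hgk
  have he2 : 2 ≤ e := by
    rcases Nat.lt_or_ge e 2 with h | h
    · interval_cases e <;> omega
    · exact h
  have hgn : g ≤ n := by
    have := Nat.mul_le_mul_left g he2
    omega
  let s : ZMod g → ZMod n := fun j => ((j.val : ℕ) : ZMod n)
  have hqs : ∀ j : ZMod g, (((s j).val : ℕ) : ZMod g) = j := by
    intro j
    have hjn : j.val < n := lt_of_lt_of_le (ZMod.val_lt j) hgn
    show ((((j.val : ℕ) : ZMod n)).val : ZMod g) = j
    rw [ZMod.val_cast_of_lt hjn, ZMod.natCast_val, ZMod.cast_id]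
  -- key: fixed configurations factor through the quotient
  have hconst : ∀ v : ZMod n → Bool, rot n (k : ZMod n) v = v →
      ∀ i : ZMod n, v i = (v ∘ s) ((i.val : ℕ) : ZMod g) := by
    intro v hv i
    apply fix_congr hv
    exact (hqs (((i.val : ℕ) : ZMod g))).symm
  let W : Finset (ZMod g → Bool) := Finset.univ.filter
      fun w => e * (Finset.univ.filter fun j => w j = true).card = ℓ
  have step1 : FixCount n ℓ (k : ZMod n) ≤ W.card := by
    rw [FixCount]
    apply Finset.card_le_card_of_injOn (fun v => v ∘ s)
    · intro v hv
      simp only [Sconf, Finset.mem_coe, Finset.mem_filter, Finset.mem_univ, true_and] at hv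
      obtain ⟨hcard, hfix⟩ := hv
      simp only [W, Finset.mem_coe, Finset.mem_filter, Finset.mem_univ, true_and]
      rw [← trues_card hg0 hn v (v ∘ s) (hconst v hfix), hcard]
    · intro v hv v' hv' hEq
      simp only [Finset.coe_filter, Set.mem_setOf_eq] at hv hv'
      have hEq' : v ∘ s = v' ∘ s := hEq
      funext i
      rw [hconst v hv.2 i, hconst v' hv'.2 i, hEq']
  have step2 : W.card ≤ g.choose (ℓ / e) := by
    have : W.card ≤ ((Finset.univ : Finset (ZMod g)).powersetCard (ℓ / e)).card := by
      apply Finset.card_le_card_of_injOn (fun w => Finset.univ.filter fun j => w j = true)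
      · intro w hw
        simp only [W, Finset.mem_coe, Finset.mem_filter, Finset.mem_univ, true_and] at hw
        rw [Finset.mem_coe, Finset.mem_powersetCard]
        beta_reduce
        refine ⟨Finset.filter_subset _ _, ?_⟩
        have : ℓ / e = (Finset.univ.filter fun j => w j = true).card := by
          rw [← hw]; exact Nat.mul_div_cancel_left _ (by omega)
        omega
      · intro w hw w' hw' hEq
        have hEq' : (Finset.univ.filter fun j => w j = true)
            = (Finset.univ.filter fun j => w' j = true) := hEq
        funext j
        have hiff : (j ∈ Finset.univ.filter fun j => w j = true)
            ↔ (j ∈ Finset.univ.filter fun j => w' j = true) := by rw [hEq']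
        simp only [Finset.mem_filter, Finset.mem_univ, true_and] at hiff
        exact Bool.eq_iff_iff.mpr (by simpa using hiff)
    rwa [Finset.card_powersetCard, Finset.card_univ, ZMod.card] at this
  have hgle : g ≤ n / 2 := by
    have : g * 2 ≤ g * e := Nat.mul_le_mul_left g he2
    omega
  have hme : ℓ / e ≤ ℓ / 2 := Nat.div_le_div_left he2 (by omega)
  have hhalf : ℓ / 2 ≤ (n / 2) / 2 := by omega
  calc FixCount n ℓ (k : ZMod n) ≤ W.card := step1
    _ ≤ g.choose (ℓ / e) := step2
    _ ≤ (n / 2).choose (ℓ / e) := Nat.choose_le_choose _ hgle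
    _ ≤ (n / 2).choose (ℓ / 2) := choose_mono_right hme hhalf
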